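/- arXiv:1408.6716 — 2 statements merged into one kernel-verified Lean document; each statement's English description precedes it below -/
import Mathlib

section
/- The map γ : S² → C = {x²+y²+z²=0} ⊆ ℙ²(ℂ), sending ε to the class of ε' + i ε'' for a positively oriented orthonormal basis (ε, ε', ε''), is a bijection. -/
open Matrix

/-- `(ε, ε', ε'')` is a positively oriented orthonormal basis of `ℝ³`. -/
def PosOrthBasis (e e' e'' : Fin 3 → ℝ) : Prop :=
  e ⬝ᵥ e = 1 ∧ e' ⬝ᵥ e' = 1 ∧ e'' ⬝ᵥ e'' = 1 ∧
  e ⬝ᵥ e' = 0 ∧ e ⬝ᵥ e'' = 0 ∧ e' ⬝ᵥ e'' = 0 ∧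
  0 < (Matrix.of ![e, e', e'']).det

/-- The complex vector `ε' + i ε'' ∈ ℂ³`. -/
def cvec (e' e'' : Fin 3 → ℝ) : Fin 3 → ℂ :=
  fun i => (e' i : ℂ) + Complex.I * (e'' i : ℂ)



set_option maxHeartbeats 4000000 in
lemma uniq_aux (a0 a1 a2 b0 b1 b2 x0 x1 x2 s t : ℝ)
    (hA : a0^2+a1^2+a2^2 = b0^2+b1^2+b2^2)
    (hAB : a0*b0+a1*b1+a2*b2 = 0)
    (hpos : 0 < a0^2+a1^2+a2^2)
    (hm : 0 < s^2+t^2)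
    (hx : x0*x0+x1*x1+x2*x2 = 1)
    (hxa : x0*(s*a0-t*b0)+x1*(s*a1-t*b1)+x2*(s*a2-t*b2) = 0)
    (hxb : x0*(s*b0+t*a0)+x1*(s*b1+t*a1)+x2*(s*b2+t*a2) = 0)
    (hdet : 0 < x0*(s*a1-t*b1)*(s*b2+t*a2) - x0*(s*a2-t*b2)*(s*b1+t*a1)
        - x1*(s*a0-t*b0)*(s*b2+t*a2) + x1*(s*a2-t*b2)*(s*b0+t*a0)
        + x2*(s*a0-t*b0)*(s*b1+t*a1) - x2*(s*a1-t*b1)*(s*b0+t*a0)) :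
    x0 = (a1*b2-a2*b1)/(a0^2+a1^2+a2^2) ∧
    x1 = (a2*b0-a0*b2)/(a0^2+a1^2+a2^2) ∧
    x2 = (a0*b1-a1*b0)/(a0^2+a1^2+a2^2) := by
  have hxa' : x0*a0+x1*a1+x2*a2 = 0 := by
    have h : (s^2+t^2) * (x0*a0+x1*a1+x2*a2) = 0 := by linear_combination s*hxa + t*hxb
    rcases mul_eq_zero.mp h with h' | h'
    · exact absurd h' hm.ne'
    · exact h'
  have hxb' : x0*b0+x1*b1+x2*b2 = 0 := by
    have h : (s^2+t^2) * (x0*b0+x1*b1+x2*b2) = 0 := by linear_combination (-t)*hxa + s*hxb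
    rcases mul_eq_zero.mp h with h' | h'
    · exact absurd h' hm.ne'
    · exact h'
  have hc2 : (a1*b2-a2*b1)^2+(a2*b0-a0*b2)^2+(a0*b1-a1*b0)^2 = (a0^2+a1^2+a2^2)^2 := by
    linear_combination (-(a0^2+a1^2+a2^2))*hA - (a0*b0+a1*b1+a2*b2)*hAB
  -- shorthand below: c0 = a1*b2-a2*b1, c1 = a2*b0-a0*b2, c2 = a0*b1-a1*b0,
  -- k = x·c, A = a0^2+a1^2+a2^2
  have cram0 : (a0^2+a1^2+a2^2)^2 * x0
      = (x0*(a1*b2-a2*b1)+x1*(a2*b0-a0*b2)+x2*(a0*b1-a1*b0)) * (a1*b2-a2*b1) := by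
    linear_combination (b1*(a0*b1-a1*b0) - b2*(a2*b0-a0*b2))*hxa'
      + (a2*(a2*b0-a0*b2) - a1*(a0*b1-a1*b0))*hxb' - x0*hc2
  have cram1 : (a0^2+a1^2+a2^2)^2 * x1
      = (x0*(a1*b2-a2*b1)+x1*(a2*b0-a0*b2)+x2*(a0*b1-a1*b0)) * (a2*b0-a0*b2) := by
    linear_combination (b2*(a1*b2-a2*b1) - b0*(a0*b1-a1*b0))*hxa'
      + (a0*(a0*b1-a1*b0) - a2*(a1*b2-a2*b1))*hxb' - x1*hc2
  have cram2 : (a0^2+a1^2+a2^2)^2 * x2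
      = (x0*(a1*b2-a2*b1)+x1*(a2*b0-a0*b2)+x2*(a0*b1-a1*b0)) * (a0*b1-a1*b0) := by
    linear_combination (b0*(a2*b0-a0*b2) - b1*(a1*b2-a2*b1))*hxa'
      + (a1*(a1*b2-a2*b1) - a0*(a2*b0-a0*b2))*hxb' - x2*hc2
  set k := x0*(a1*b2-a2*b1)+x1*(a2*b0-a0*b2)+x2*(a0*b1-a1*b0) with hk_def
  have hk2 : k^2 * (a0^2+a1^2+a2^2)^2 = (a0^2+a1^2+a2^2)^2 * (a0^2+a1^2+a2^2)^2 := by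
    linear_combination (-((a0^2+a1^2+a2^2)^2*x0 + k*(a1*b2-a2*b1)))*cram0
      - ((a0^2+a1^2+a2^2)^2*x1 + k*(a2*b0-a0*b2))*cram1
      - ((a0^2+a1^2+a2^2)^2*x2 + k*(a0*b1-a1*b0))*cram2
      - k^2*hc2 + ((a0^2+a1^2+a2^2)^2)^2*hx
  have hkpos : 0 < k := by
    have hd : 0 < (s^2+t^2) * k := by
      have heq : (s^2+t^2) * k = x0*(s*a1-t*b1)*(s*b2+t*a2) - x0*(s*a2-t*b2)*(s*b1+t*a1)
        - x1*(s*a0-t*b0)*(s*b2+t*a2) + x1*(s*a2-t*b2)*(s*b0+t*a0)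
        + x2*(s*a0-t*b0)*(s*b1+t*a1) - x2*(s*a1-t*b1)*(s*b0+t*a0) := by
        rw [hk_def]; ring
      rw [heq]; exact hdet
    rcases mul_pos_iff.mp hd with ⟨_, h⟩ | ⟨h, _⟩
    · exact h
    · linarith only [hm, h]
  have hk : k = a0^2+a1^2+a2^2 := by
    have h : (k - (a0^2+a1^2+a2^2)) * (k + (a0^2+a1^2+a2^2)) * (a0^2+a1^2+a2^2)^2 = 0 := by
      linear_combination hk2
    rcases mul_eq_zero.mp h with h' | h'
    · rcases mul_eq_zero.mp h' with h'' | h''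
      · linarith only [h'']
      · linarith only [h'', hkpos, hpos]
    · exact absurd h' (pow_ne_zero 2 hpos.ne')
  refine ⟨?_, ?_, ?_⟩
  · rw [eq_div_iff hpos.ne']
    have h : (a0^2+a1^2+a2^2) * ((a0^2+a1^2+a2^2) * x0 - (a1*b2-a2*b1)) = 0 := by
      linear_combination cram0 + (a1*b2-a2*b1)*hk
    rcases mul_eq_zero.mp h with h' | h'
    · exact absurd h' hpos.ne'
    · linear_combination h'
  · rw [eq_div_iff hpos.ne']
    have h : (a0^2+a1^2+a2^2) * ((a0^2+a1^2+a2^2) * x1 - (a2*b0-a0*b2)) = 0 := by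
      linear_combination cram1 + (a2*b0-a0*b2)*hk
    rcases mul_eq_zero.mp h with h' | h'
    · exact absurd h' hpos.ne'
    · linear_combination h'
  · rw [eq_div_iff hpos.ne']
    have h : (a0^2+a1^2+a2^2) * ((a0^2+a1^2+a2^2) * x2 - (a0*b1-a1*b0)) = 0 := by
      linear_combination cram2 + (a0*b1-a1*b0)*hk
    rcases mul_eq_zero.mp h with h' | h'
    · exact absurd h' hpos.ne'
    · linear_combination h'


set_option maxHeartbeats 4000000 in
/-- `γ : S² → C = {x²+y²+z²=0} ⊆ ℙ²(ℂ)` is a bijection: every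
point of the conic `C` (given by a nonzero vector `w` with `∑ wᵢ² = 0`) has
exactly one preimage `ε` on the unit sphere, i.e. exactly one unit vector `ε`
admitting a positively oriented orthonormal completion `(ε', ε'')` with
`ε' + i ε''` proportional to `w`. -/
theorem gamma_bijective
    (w : Fin 3 → ℂ) (hw : w ≠ 0) (hC : ∑ i : Fin 3, (w i) ^ 2 = 0) :
    ∃! ε : Fin 3 → ℝ, ε ⬝ᵥ ε = 1 ∧
      ∃ ε' ε'' : Fin 3 → ℝ, PosOrthBasis ε ε' ε'' ∧
        ∃ c : ℂ, c ≠ 0 ∧ cvec ε' ε'' = c • w := by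
  have hA : (w 0).re^2+(w 1).re^2+(w 2).re^2 = (w 0).im^2+(w 1).im^2+(w 2).im^2 := by
    have h := congrArg Complex.re hC
    simp [Fin.sum_univ_three, pow_two, Complex.mul_re] at h
    ring_nf
    ring_nf at h
    linarith
  have hAB : (w 0).re*(w 0).im+(w 1).re*(w 1).im+(w 2).re*(w 2).im = 0 := by
    have h := congrArg Complex.im hC
    simp [Fin.sum_univ_three, pow_two, Complex.mul_im] at h
    linarith
  have hpos : 0 < (w 0).re^2+(w 1).re^2+(w 2).re^2 := by
    by_contra hle
    push_neg at hle
    have hAz : (w 0).re^2+(w 1).re^2+(w 2).re^2 = 0 := le_antisymm hle (by positivity)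
    have hBz : (w 0).im^2+(w 1).im^2+(w 2).im^2 = 0 := by linarith
    apply hw
    have e1 : (w 0).re = 0 := by
      have h2 : (w 0).re^2 = 0 := le_antisymm (by nlinarith [sq_nonneg (w 1).re, sq_nonneg (w 2).re]) (sq_nonneg (w 0).re)
      exact pow_eq_zero_iff two_ne_zero |>.mp h2
    have e2 : (w 1).re = 0 := by
      have h2 : (w 1).re^2 = 0 := le_antisymm (by nlinarith [sq_nonneg (w 0).re, sq_nonneg (w 2).re]) (sq_nonneg (w 1).re)
      exact pow_eq_zero_iff two_ne_zero |>.mp h2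
    have e3 : (w 2).re = 0 := by
      have h2 : (w 2).re^2 = 0 := le_antisymm (by nlinarith [sq_nonneg (w 0).re, sq_nonneg (w 1).re]) (sq_nonneg (w 2).re)
      exact pow_eq_zero_iff two_ne_zero |>.mp h2
    have e4 : (w 0).im = 0 := by
      have h2 : (w 0).im^2 = 0 := le_antisymm (by nlinarith [sq_nonneg (w 1).im, sq_nonneg (w 2).im]) (sq_nonneg (w 0).im)
      exact pow_eq_zero_iff two_ne_zero |>.mp h2
    have e5 : (w 1).im = 0 := by
      have h2 : (w 1).im^2 = 0 := le_antisymm (by nlinarith [sq_nonneg (w 0).im, sq_nonneg (w 2).im]) (sq_nonneg (w 1).im)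
      exact pow_eq_zero_iff two_ne_zero |>.mp h2
    have e6 : (w 2).im = 0 := by
      have h2 : (w 2).im^2 = 0 := le_antisymm (by nlinarith [sq_nonneg (w 0).im, sq_nonneg (w 1).im]) (sq_nonneg (w 2).im)
      exact pow_eq_zero_iff two_ne_zero |>.mp h2
    funext i
    fin_cases i
    · exact Complex.ext (by simpa using e1) (by simpa using e4)
    · exact Complex.ext (by simpa using e2) (by simpa using e5)
    · exact Complex.ext (by simpa using e3) (by simpa using e6)
  obtain ⟨ra, hr2, hr0⟩ : ∃ r : ℝ, r^2 = (w 0).re^2+(w 1).re^2+(w 2).re^2 ∧ 0 < r :=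
    ⟨Real.sqrt ((w 0).re^2+(w 1).re^2+(w 2).re^2), Real.sq_sqrt hpos.le, Real.sqrt_pos.mpr hpos⟩
  have key : ((w 1).re*(w 2).im-(w 2).re*(w 1).im)^2+((w 2).re*(w 0).im-(w 0).re*(w 2).im)^2+((w 0).re*(w 1).im-(w 1).re*(w 0).im)^2 = ((w 0).re^2+(w 1).re^2+(w 2).re^2)^2 := by
    linear_combination (-((w 0).re^2+(w 1).re^2+(w 2).re^2))*hA - ((w 0).re*(w 0).im+(w 1).re*(w 1).im+(w 2).re*(w 2).im)*hAB
  have h1 : (![((w 1).re*(w 2).im-(w 2).re*(w 1).im)/((w 0).re^2+(w 1).re^2+(w 2).re^2), ((w 2).re*(w 0).im-(w 0).re*(w 2).im)/((w 0).re^2+(w 1).re^2+(w 2).re^2), ((w 0).re*(w 1).im-(w 1).re*(w 0).im)/((w 0).re^2+(w 1).re^2+(w 2).re^2)] : Fin 3 → ℝ) ⬝ᵥ ![((w 1).re*(w 2).im-(w 2).re*(w 1).im)/((w 0).re^2+(w 1).re^2+(w 2).re^2), ((w 2).re*(w 0).im-(w 0).re*(w 2).im)/((w 0).re^2+(w 1).re^2+(w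 2).re^2), ((w 0).re*(w 1).im-(w 1).re*(w 0).im)/((w 0).re^2+(w 1).re^2+(w 2).re^2)] = 1 := by
    simp only [dotProduct, Fin.sum_univ_three, Matrix.cons_val_zero, Matrix.cons_val_one,
      Matrix.head_cons, Matrix.cons_val_two, Matrix.tail_cons]
    field_simp
    linear_combination key
  have h2 : (fun i => (w i).re / ra) ⬝ᵥ (fun i => (w i).re / ra) = 1 := by
    simp only [dotProduct, Fin.sum_univ_three]
    field_simp
    linear_combination -hr2
  have h3 : (fun i => (w i).im / ra) ⬝ᵥ (fun i => (w i).im / ra) = 1 := by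
    simp only [dotProduct, Fin.sum_univ_three]
    field_simp
    linear_combination -hr2 - hA
  have h4 : (![((w 1).re*(w 2).im-(w 2).re*(w 1).im)/((w 0).re^2+(w 1).re^2+(w 2).re^2), ((w 2).re*(w 0).im-(w 0).re*(w 2).im)/((w 0).re^2+(w 1).re^2+(w 2).re^2), ((w 0).re*(w 1).im-(w 1).re*(w 0).im)/((w 0).re^2+(w 1).re^2+(w 2).re^2)] : Fin 3 → ℝ) ⬝ᵥ (fun i => (w i).re / ra) = 0 := by
    simp only [dotProduct, Fin.sum_univ_three, Matrix.cons_val_zero, Matrix.cons_val_one,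
      Matrix.head_cons, Matrix.cons_val_two, Matrix.tail_cons]
    field_simp
    ring
  have h5 : (![((w 1).re*(w 2).im-(w 2).re*(w 1).im)/((w 0).re^2+(w 1).re^2+(w 2).re^2), ((w 2).re*(w 0).im-(w 0).re*(w 2).im)/((w 0).re^2+(w 1).re^2+(w 2).re^2), ((w 0).re*(w 1).im-(w 1).re*(w 0).im)/((w 0).re^2+(w 1).re^2+(w 2).re^2)] : Fin 3 → ℝ) ⬝ᵥ (fun i => (w i).im / ra) = 0 := by
    simp only [dotProduct, Fin.sum_univ_three, Matrix.cons_val_zero, Matrix.cons_val_one,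
      Matrix.head_cons, Matrix.cons_val_two, Matrix.tail_cons]
    field_simp
    ring
  have h6 : (fun i => (w i).re / ra) ⬝ᵥ (fun i => (w i).im / ra) = 0 := by
    simp only [dotProduct, Fin.sum_univ_three]
    field_simp
    linear_combination hAB
  have hdet1 : (Matrix.of ![(![((w 1).re*(w 2).im-(w 2).re*(w 1).im)/((w 0).re^2+(w 1).re^2+(w 2).re^2), ((w 2).re*(w 0).im-(w 0).re*(w 2).im)/((w 0).re^2+(w 1).re^2+(w 2).re^2), ((w 0).re*(w 1).im-(w 1).re*(w 0).im)/((w 0).re^2+(w 1).re^2+(w 2).re^2)] : Fin 3 → ℝ),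
      (fun i => (w i).re / ra), (fun i => (w i).im / ra)]).det = 1 := by
    rw [Matrix.det_fin_three]
    simp only [Matrix.of_apply, Matrix.cons_val', Matrix.cons_val_zero, Matrix.cons_val_one,
      Matrix.head_cons, Matrix.cons_val_two, Matrix.tail_cons, Matrix.empty_val',
      Matrix.cons_val_fin_one, Matrix.head_fin_const]
    field_simp
    linear_combination key - ((w 0).re^2+(w 1).re^2+(w 2).re^2)*hr2
  have hcv : cvec (fun i => (w i).re / ra) (fun i => (w i).im / ra) = ((ra⁻¹ : ℝ) : ℂ) • w := by
    funext i
    apply Complex.ext <;>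
      simp [cvec, Complex.add_re, Complex.add_im, Complex.mul_re, Complex.mul_im] <;> ring
  refine ⟨![((w 1).re*(w 2).im-(w 2).re*(w 1).im)/((w 0).re^2+(w 1).re^2+(w 2).re^2), ((w 2).re*(w 0).im-(w 0).re*(w 2).im)/((w 0).re^2+(w 1).re^2+(w 2).re^2), ((w 0).re*(w 1).im-(w 1).re*(w 0).im)/((w 0).re^2+(w 1).re^2+(w 2).re^2)],
    ⟨h1, (fun i => (w i).re / ra), (fun i => (w i).im / ra),
      ⟨h1, h2, h3, h4, h5, h6, by rw [hdet1]; norm_num⟩,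
      ((ra⁻¹ : ℝ) : ℂ), Complex.ofReal_ne_zero.mpr (inv_ne_zero hr0.ne'), hcv⟩, ?_⟩
  rintro y ⟨hy1, p, q, ⟨hpe, hpp, hqq, hyp2, hyq2, hpq, hdety⟩, c, hc, hcvy⟩
  have hp : ∀ i, p i = c.re * (w i).re - c.im * (w i).im := by
    intro i
    have h := congrFun hcvy i
    simp [cvec, Complex.ext_iff, Complex.add_re, Complex.add_im, Complex.mul_re,
      Complex.mul_im] at h
    linarith only [h.1]
  have hq : ∀ i, q i = c.re * (w i).im + c.im * (w i).re := by
    intro i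
    have h := congrFun hcvy i
    simp [cvec, Complex.ext_iff, Complex.add_re, Complex.add_im, Complex.mul_re,
      Complex.mul_im] at h
    linarith only [h.2]
  have hm : 0 < c.re^2 + c.im^2 := by
    have h := Complex.normSq_pos.mpr hc
    rw [Complex.normSq_apply] at h
    nlinarith [h]
  simp only [dotProduct, Fin.sum_univ_three] at hy1 hyp2 hyq2
  rw [Matrix.det_fin_three] at hdety
  simp only [Matrix.of_apply, Matrix.cons_val', Matrix.cons_val_zero, Matrix.cons_val_one,
    Matrix.head_cons, Matrix.cons_val_two, Matrix.tail_cons, Matrix.empty_val',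
    Matrix.cons_val_fin_one, Matrix.head_fin_const] at hdety
  rw [hp 0, hp 1, hp 2] at hyp2
  rw [hq 0, hq 1, hq 2] at hyq2
  rw [hp 0, hp 1, hp 2, hq 0, hq 1, hq 2] at hdety
  obtain ⟨u0, u1, u2⟩ := uniq_aux (w 0).re (w 1).re (w 2).re (w 0).im (w 1).im (w 2).im
    (y 0) (y 1) (y 2) c.re c.im hA hAB hpos hm hy1 hyp2 hyq2 hdety
  funext j
  fin_cases j
  · simpa using u0
  · simpa using u1
  · simpa using u2
end

section
/- Let A₁,...,A₅ ∈ ℝ³ be coplanar points, say Aᵢ = (pᵢ, qᵢ, 0). For ε ∈ S² with γ(ε) = (x:y:z) ∈ C, the projections π_ε(Aᵢ) ∈ ℂ are given by pᵢx + qᵢy; consequently the Möbius equivalence class of (π_ε(A₁),...,π_ε(A₅)) depends only on the point (x:y) ∈ ℙ¹(ℂ), i.e., the photographic map factors through the 2:1 projection (x:y:z) ↦ (x:y) from C to ℙ¹(ℂ). -/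
open Matrix

/-- let `A₁, …, A₅` be coplanar points `Aᵢ = (pᵢ, qᵢ, 0)` of
`ℝ³`. For a direction `ε ∈ S²` with `γ(ε) = (x:y:z)`, the projection
`π_ε(Aᵢ) ∈ ℂ` equals `pᵢ x + qᵢ y`; consequently, if two directions `ε, δ`
have `γ`-images with the same `(x:y) ∈ ℙ¹(ℂ)`, the two projected 5-tuples are
Möbius equivalent, i.e. the photographic map factors through the 2:1 map
`(x:y:z) ↦ (x:y)`. -/
theorem planar_photographic_map_factors
    (A : Fin 5 → Fin 3 → ℝ) (hplanar : ∀ i, A i 2 = 0)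
    (ε ε' ε'' δ δ' δ'' : Fin 3 → ℝ)
    (hε : PosOrthBasis ε ε' ε'') (hδ : PosOrthBasis δ δ' δ'')
    (hxy : ∃ c : ℂ, c ≠ 0 ∧
      cvec δ' δ'' 0 = c * cvec ε' ε'' 0 ∧ cvec δ' δ'' 1 = c * cvec ε' ε'' 1) :
    (∀ i, (cvec ε' ε'' ⬝ᵥ fun j => ((A i j : ℂ)))
        = (A i 0 : ℂ) * cvec ε' ε'' 0 + (A i 1 : ℂ) * cvec ε' ε'' 1) ∧
    ∃ g : GL (Fin 2) ℂ, ∀ i, ∃ d : ℂ, d ≠ 0 ∧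
      (g : Matrix (Fin 2) (Fin 2) ℂ).mulVec
          ![(A i 0 : ℂ) * cvec ε' ε'' 0 + (A i 1 : ℂ) * cvec ε' ε'' 1, 1]
        = d • ![(A i 0 : ℂ) * cvec δ' δ'' 0 + (A i 1 : ℂ) * cvec δ' δ'' 1, 1] := by
  obtain ⟨c, hc, h0, h1⟩ := hxy
  constructor
  · intro i
    simp [dotProduct, Fin.sum_univ_three, hplanar i, cvec, mul_comm]
  · refine ⟨⟨Matrix.diagonal ![c, 1], Matrix.diagonal ![c⁻¹, 1], ?_, ?_⟩, ?_⟩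
    · rw [Matrix.diagonal_mul_diagonal]
      ext i j
      fin_cases i <;> fin_cases j <;>
        simp [Matrix.diagonal, mul_inv_cancel₀ hc]
    · rw [Matrix.diagonal_mul_diagonal]
      ext i j
      fin_cases i <;> fin_cases j <;>
        simp [Matrix.diagonal, inv_mul_cancel₀ hc]
    · intro i
      refine ⟨1, one_ne_zero, ?_⟩
      ext j
      fin_cases j <;>
        simp [Matrix.mulVec, dotProduct, Fin.sum_univ_two, Matrix.diagonal,
          h0, h1] <;> ring
end
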